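/- (Proposition 3, first part.) Let N be a finite set of voters, f a neutral and strategy-proof full-domain rule, and 𝒞 an M-winning coalition set on N. Then the M-winning coalition rule with default f, 𝒞^f, is well-defined (no two members of 𝒞 can be unanimous for opposite strict preferences at the same full profile), and 𝒞^f is neutral and strategy-proof. -/
import Mathlib


/-- A rule is strategy-proof if whenever a voter's misreport would give his true
preference, truthful reporting gives it as well. -/
def StrategyProof {N : Type*} [DecidableEq N] (f : (N → Bool) → Bool) : Prop :=
  ∀ (R : N → Bool) (i : N) (b : Bool), f (Function.update R i b) = R i → f R = R i

/-- A rule is neutral if it commutes with flipping the two candidates. -/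
def Neutral {N : Type*} (f : (N → Bool) → Bool) : Prop :=
  ∀ R : N → Bool, f (fun i => !(R i)) = !(f R)

/-- An M-winning coalition set: nonempty, members nonempty, minimality (P1),
and Moulin's property (P2). -/
def IsMWCS {N : Type*} [DecidableEq N] (𝒞 : Set (Finset N)) : Prop :=
  𝒞.Nonempty ∧ (∀ C ∈ 𝒞, C.Nonempty) ∧
    (∀ C ∈ 𝒞, ∀ C' ∈ 𝒞, C ⊆ C' → C = C') ∧
    (∀ C : Finset N, (∃ C' ∈ 𝒞, C' ⊆ C) ↔ ∀ C'' ∈ 𝒞, (C ∩ C'').Nonempty)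

/-- `f` is the M-winning coalition rule associated with `𝒞`. -/
def IsMWCRule {N : Type*} (𝒞 : Set (Finset N)) (f : (N → Bool) → Bool) : Prop :=
  ∀ (R : N → Bool) (x : Bool), f R = x ↔ ∃ C ∈ 𝒞, ∀ i ∈ C, R i = x

/-- `g` is the sequential unanimity rule associated with the sequence `S`. -/
def IsSURule {N : Type*} {K : ℕ} (S : Fin K → Finset N) (g : (N → Bool) → Bool) : Prop :=
  ∀ (R : N → Bool) (x : Bool),
    g R = x ↔ ∃ k : Fin K, (∀ i ∈ S k, R i = x) ∧
      ∀ l < k, ∃ i ∈ S l, ∃ j ∈ S l, R i ≠ R j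

/-- A full-domain rule is neutral if it commutes with flipping the two candidates
(indifference/ties are mapped to themselves). -/
def FullNeutral {N : Type*} (g : (N → Option Bool) → Option Bool) : Prop :=
  ∀ R : N → Option Bool, g (fun i => Option.map not (R i)) = Option.map not (g R)

/-- The ranking of outcomes by a voter with strict preference for `x`:
`some x ≻ none ≻ some (!x)`. -/
def rankOutcome (x : Bool) : Option Bool → ℕ
  | none => 1
  | some y => if y = x then 2 else 0

/-- A full-domain rule is strategy-proof if no voter with a strict preference can
obtain a strictly better-ranked outcome by misreporting. -/
def FullStrategyProof {N : Type*} [DecidableEq N]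
    (g : (N → Option Bool) → Option Bool) : Prop :=
  ∀ (R : N → Option Bool) (i : N) (x : Bool), R i = some x →
    ∀ r : Option Bool, rankOutcome x (g (Function.update R i r)) ≤ rankOutcome x (g R)

/-- `g` is the M-winning coalition rule with default `f` associated with `𝒞`. -/
def IsMWCFullRule {N : Type*} (𝒞 : Set (Finset N))
    (f g : (N → Option Bool) → Option Bool) : Prop :=
  ∀ R : N → Option Bool,
    (∀ x : Bool, (∃ C ∈ 𝒞, ∀ i ∈ C, R i = some x) → g R = some x) ∧
    ((¬ ∃ x : Bool, ∃ C ∈ 𝒞, ∀ i ∈ C, R i = some x) → g R = f R)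

/-- `g` is the sequential unanimity rule with default `f` associated with `S`. -/
def IsSUFullRule {N : Type*} {K : ℕ} (S : Fin K → Finset N)
    (f g : (N → Option Bool) → Option Bool) : Prop :=
  ∀ R : N → Option Bool,
    (∀ x : Bool, (∃ k : Fin K, (∀ i ∈ S k, R i = some x) ∧
        ∀ l < k, ∃ i ∈ S l, R i = some x) → g R = some x) ∧
    ((¬ ∃ x : Bool, ∃ k : Fin K, (∀ i ∈ S k, R i = some x) ∧
        ∀ l < k, ∃ i ∈ S l, R i = some x) → g R = f R)

/-- Proposition 3 (first part): the M-winning coalition rule with a neutral,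
strategy-proof default is well-defined, neutral and strategy-proof. -/
theorem stmt12 {N : Type*} [Fintype N] [DecidableEq N] (𝒞 : Set (Finset N))
    (h𝒞 : IsMWCS 𝒞) (f : (N → Option Bool) → Option Bool)
    (hfN : FullNeutral f) (hfSP : FullStrategyProof f) :
    (∀ R : N → Option Bool, ¬ ∃ C ∈ 𝒞, ∃ C' ∈ 𝒞, ∃ x : Bool,
        (∀ i ∈ C, R i = some x) ∧ (∀ j ∈ C', R j = some (!x))) ∧
    (∀ g : (N → Option Bool) → Option Bool,
        IsMWCFullRule 𝒞 f g → FullNeutral g ∧ FullStrategyProof g) := by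
  obtain ⟨-, -, -, hP2⟩ := h𝒞
  have hint : ∀ C ∈ 𝒞, ∀ C' ∈ 𝒞, (C ∩ C').Nonempty := by
    intro C hC C' hC'
    exact ((hP2 C).mp ⟨C, hC, subset_rfl⟩) C' hC'
  have wd : ∀ R : N → Option Bool, ¬ ∃ C ∈ 𝒞, ∃ C' ∈ 𝒞, ∃ x : Bool,
      (∀ i ∈ C, R i = some x) ∧ (∀ j ∈ C', R j = some (!x)) := by
    rintro R ⟨C, hC, C', hC', x, h1, h2⟩
    obtain ⟨i, hi⟩ := hint C hC C' hC'
    simp only [Finset.mem_inter] at hi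
    have e1 := h1 i hi.1
    have e2 := h2 i hi.2
    rw [e1] at e2
    cases x <;> simp at e2
  refine ⟨wd, ?_⟩
  intro g hg
  have gEq : ∀ R (y : Bool), (∃ C ∈ 𝒞, ∀ i ∈ C, R i = some y) → g R = some y :=
    fun R y h => (hg R).1 y h
  have gDef : ∀ R, (¬ ∃ y : Bool, ∃ C ∈ 𝒞, ∀ i ∈ C, R i = some y) → g R = f R :=
    fun R h => (hg R).2 h
  have hrle : ∀ (x : Bool) (o : Option Bool), rankOutcome x o ≤ 2 := by
    intro x o
    rcases o with - | y <;> simp [rankOutcome]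
    split <;> omega
  constructor
  · intro R
    by_cases h : ∃ y : Bool, ∃ C ∈ 𝒞, ∀ i ∈ C, R i = some y
    · obtain ⟨y, C, hC, hu⟩ := h
      rw [gEq R y ⟨C, hC, hu⟩]
      exact gEq _ (!y) ⟨C, hC, fun i hi => by rw [hu i hi]; rfl⟩
    · have h' : ¬ ∃ y : Bool, ∃ C ∈ 𝒞, ∀ i ∈ C, (Option.map not (R i)) = some y := by
        rintro ⟨y, C, hC, hu⟩
        refine h ⟨!y, C, hC, fun i hi => ?_⟩
        have := hu i hi
        cases hR : R i with
        | none => simp [hR] at this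
        | some b =>
          simp [hR] at this ⊢
          simp [← this]
      rw [gDef _ h', gDef R h, hfN]
  · intro R i x hx r
    set R' := Function.update R i r with hR'
    by_cases h1 : ∃ y : Bool, ∃ C ∈ 𝒞, ∀ j ∈ C, R' j = some y
    · obtain ⟨y, C, hC, hu⟩ := h1
      by_cases hiC : i ∈ C
      · have hy : r = some y := by
          have := hu i hiC
          simpa [hR'] using this
        by_cases hyx : y = x
        · have hRR : R' = R := by
            subst hyx
            rw [hR', hy, ← hx, Function.update_eq_self]
          rw [hRR]
        · have hyb : y = !x := by revert hyx; cases y <;> cases x <;> simp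
          rw [gEq R' y ⟨C, hC, hu⟩, hyb]
          simp [rankOutcome]
      · have huR : ∀ j ∈ C, R j = some y := fun j hj => by
          rw [← hu j hj, hR', Function.update_of_ne (show j ≠ i from fun h => hiC (h ▸ hj))]
        rw [gEq R' y ⟨C, hC, hu⟩, gEq R y ⟨C, hC, huR⟩]
    · rw [gDef R' h1]
      by_cases h2 : ∃ y : Bool, ∃ C ∈ 𝒞, ∀ j ∈ C, R j = some y
      · obtain ⟨y, C, hC, hu⟩ := h2
        have hiC : i ∈ C := by
          by_contra hiC
          exact h1 ⟨y, C, hC, fun j hj => by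
            rw [hR', Function.update_of_ne (show j ≠ i from fun h => hiC (h ▸ hj)), hu j hj]⟩
        have hyx : y = x := by
          have := hu i hiC; rw [hx] at this; exact (Option.some_inj.mp this).symm
        rw [gEq R y ⟨C, hC, hu⟩, hyx]
        simpa [rankOutcome] using hrle x (f R')
      · rw [gDef R h2]
        exact hfSP R i x hx r
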